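/- Let X = USVᵀ with U, V orthogonal and S diagonal with nonnegative entries. Partition U = [U₁ U₂] and S = diag(S₁, S₂) at index ℓ, where all entries of S₁ are at least s_ℓ > 0 and all entries of S₂ are at most s_{ℓ+1}. Suppose a sequence of n×ℓ matrices M_k satisfies U₂ᵀM_k = S₂^{2k} U₂ᵀM₀ (U₁ᵀM₀)⁻¹ S₁^{−2k} U₁ᵀM_k (with U₁ᵀM₀ invertible). Then ‖U₂ᵀM_k‖ ≤ ‖U₂ᵀM₀(U₁ᵀM₀)⁻¹‖·(s_{ℓ+1}/s_ℓ)^{2k}·‖U₁ᵀM_k‖, so if s_{ℓ+1} < s_ℓ and ‖U₁ᵀM_k‖ stays bounded, ‖U₂ᵀM_k‖ → 0 geometrically. -/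

import Mathlib

open Matrix Filter
open scoped Matrix.Norms.L2Operator

lemma l2_opNorm_diagonal_le {m : ℕ} (v : Fin m → ℝ) (c : ℝ) (hc : 0 ≤ c)
    (h : ∀ i, |v i| ≤ c) : ‖Matrix.diagonal v‖ ≤ c := by
  rw [Matrix.l2_opNorm_def]
  apply ContinuousLinearMap.opNorm_le_bound _ hc
  intro x
  have hx : ((Matrix.toEuclideanLin.trans LinearMap.toContinuousLinearMap)
      (Matrix.diagonal v)) x
      = (WithLp.equiv 2 _).symm ((Matrix.diagonal v) *ᵥ (WithLp.equiv 2 _ x)) := by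
    simp [Matrix.toEuclideanLin_apply]
  rw [hx]
  rw [EuclideanSpace.norm_eq, EuclideanSpace.norm_eq]
  have key : ∑ i, ‖((Matrix.diagonal v) *ᵥ (WithLp.equiv 2 _ x)) i‖ ^ 2
      ≤ c ^ 2 * ∑ i, ‖x i‖ ^ 2 := by
    rw [Finset.mul_sum]
    apply Finset.sum_le_sum
    intro i _
    rw [Matrix.mulVec_diagonal]
    have : ‖v i * (WithLp.equiv 2 _ x) i‖ ≤ c * ‖x i‖ := by
      rw [norm_mul]
      have : ‖v i‖ ≤ c := by simpa [Real.norm_eq_abs] using h i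
      exact mul_le_mul_of_nonneg_right this (norm_nonneg _)
    calc ‖v i * (WithLp.equiv 2 _ x) i‖ ^ 2 ≤ (c * ‖x i‖) ^ 2 := by
          apply pow_le_pow_left₀ (norm_nonneg _) this
      _ = c ^ 2 * ‖x i‖ ^ 2 := by ring
  calc Real.sqrt (∑ i, ‖((Matrix.diagonal v) *ᵥ (WithLp.equiv 2 _ x)) i‖ ^ 2)
      ≤ Real.sqrt (c ^ 2 * ∑ i, ‖x i‖ ^ 2) := Real.sqrt_le_sqrt key
    _ = c * Real.sqrt (∑ i, ‖x i‖ ^ 2) := by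
        rw [Real.sqrt_mul (sq_nonneg c), Real.sqrt_sq hc]

/-- Let `X = USVᵀ` with `U` orthogonal, partitioned as `U = [U₁ U₂]` and
`S = diag(S₁, S₂)` at index `ℓ`, where all entries of `S₁` are at least
`sℓ > 0` and all entries of `S₂` are nonnegative and at most `sℓ₊₁ < sℓ`.
If a sequence of `n×ℓ` matrices `M_k` satisfies
`U₂ᵀM_k = S₂^{2k} U₂ᵀM₀ (U₁ᵀM₀)⁻¹ S₁^{−2k} U₁ᵀM_k` (with `U₁ᵀM₀` invertible),
then `‖U₂ᵀM_k‖ ≤ ‖U₂ᵀM₀(U₁ᵀM₀)⁻¹‖·(sℓ₊₁/sℓ)^{2k}·‖U₁ᵀM_k‖` in the spectral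
norm, and if `‖U₁ᵀM_k‖` stays bounded then `‖U₂ᵀM_k‖ → 0`. -/
theorem subspace_iteration_convergence (n l q : ℕ)
    (sl sl1 : ℝ) (hsl : 0 < sl) (hsl1 : 0 ≤ sl1) (hlt : sl1 < sl)
    (σ1 : Fin l → ℝ) (hσ1 : ∀ i, sl ≤ σ1 i)
    (σ2 : Fin q → ℝ) (hσ2 : ∀ i, 0 ≤ σ2 i ∧ σ2 i ≤ sl1)
    (U1 : Matrix (Fin n) (Fin l) ℝ) (U2 : Matrix (Fin n) (Fin q) ℝ)
    (hU1 : U1ᵀ * U1 = 1) (hU2 : U2ᵀ * U2 = 1) (hU12 : U1ᵀ * U2 = 0)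
    (M : ℕ → Matrix (Fin n) (Fin l) ℝ)
    (hM0 : IsUnit (U1ᵀ * M 0))
    (hrel : ∀ k : ℕ, U2ᵀ * M k =
      (Matrix.diagonal σ2) ^ (2 * k) * (U2ᵀ * M 0) * (U1ᵀ * M 0)⁻¹ *
        ((Matrix.diagonal σ1)⁻¹) ^ (2 * k) * (U1ᵀ * M k)) :
    (∀ k : ℕ, ‖U2ᵀ * M k‖ ≤
        ‖(U2ᵀ * M 0) * (U1ᵀ * M 0)⁻¹‖ * (sl1 / sl) ^ (2 * k) * ‖U1ᵀ * M k‖) ∧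
      (∀ C : ℝ, (∀ k, ‖U1ᵀ * M k‖ ≤ C) →
        Tendsto (fun k => ‖U2ᵀ * M k‖) atTop (nhds 0)) := by
  set A := (U2ᵀ * M 0) * (U1ᵀ * M 0)⁻¹ with hA
  have hinv : (Matrix.diagonal σ1)⁻¹ = Matrix.diagonal (fun i => (σ1 i)⁻¹) := by
    apply Matrix.inv_eq_right_inv
    rw [Matrix.diagonal_mul_diagonal]
    have : (fun i => σ1 i * (σ1 i)⁻¹) = fun _ : Fin l => (1:ℝ) := by
      funext i
      exact mul_inv_cancel₀ (ne_of_gt (lt_of_lt_of_le hsl (hσ1 i)))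
    rw [this, Matrix.diagonal_one]
  have hD2 : ∀ k : ℕ, ‖(Matrix.diagonal σ2) ^ (2 * k)‖ ≤ sl1 ^ (2 * k) := by
    intro k
    rw [Matrix.diagonal_pow]
    apply l2_opNorm_diagonal_le _ _ (pow_nonneg hsl1 _)
    intro i
    have h1 := (hσ2 i).1
    have h2 := (hσ2 i).2
    simp only [Pi.pow_apply]
    rw [abs_pow, abs_of_nonneg h1]
    exact pow_le_pow_left₀ h1 h2 _
  have hD1 : ∀ k : ℕ, ‖((Matrix.diagonal σ1)⁻¹) ^ (2 * k)‖ ≤ (sl⁻¹) ^ (2 * k) := by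
    intro k
    rw [hinv, Matrix.diagonal_pow]
    apply l2_opNorm_diagonal_le _ _ (pow_nonneg (inv_nonneg.2 hsl.le) _)
    intro i
    have hσpos : 0 < σ1 i := lt_of_lt_of_le hsl (hσ1 i)
    simp only [Pi.pow_apply]
    rw [abs_pow, abs_of_nonneg (inv_nonneg.2 hσpos.le)]
    exact pow_le_pow_left₀ (inv_nonneg.2 hσpos.le)
      (inv_anti₀ hsl (hσ1 i)) _
  have main : ∀ k : ℕ, ‖U2ᵀ * M k‖ ≤
      ‖A‖ * (sl1 / sl) ^ (2 * k) * ‖U1ᵀ * M k‖ := by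
    intro k
    have hrw : U2ᵀ * M k =
        (Matrix.diagonal σ2) ^ (2 * k) *
          (A * (((Matrix.diagonal σ1)⁻¹) ^ (2 * k) * (U1ᵀ * M k))) := by
      rw [hrel k, hA]
      simp only [Matrix.mul_assoc]
    have h1 : ‖A * (((Matrix.diagonal σ1)⁻¹) ^ (2 * k) * (U1ᵀ * M k))‖
        ≤ ‖A‖ * (‖((Matrix.diagonal σ1)⁻¹) ^ (2 * k)‖ * ‖U1ᵀ * M k‖) :=
      le_trans (Matrix.l2_opNorm_mul _ _)
        (mul_le_mul_of_nonneg_left (Matrix.l2_opNorm_mul _ _) (norm_nonneg _))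
    have h2 : ‖U2ᵀ * M k‖ ≤ ‖(Matrix.diagonal σ2) ^ (2 * k)‖ *
        (‖A‖ * (‖((Matrix.diagonal σ1)⁻¹) ^ (2 * k)‖ * ‖U1ᵀ * M k‖)) := by
      rw [hrw]
      exact le_trans (Matrix.l2_opNorm_mul _ _)
        (mul_le_mul_of_nonneg_left h1 (norm_nonneg _))
    have h3 : ‖(Matrix.diagonal σ2) ^ (2 * k)‖ *
        (‖A‖ * (‖((Matrix.diagonal σ1)⁻¹) ^ (2 * k)‖ * ‖U1ᵀ * M k‖))
        ≤ sl1 ^ (2 * k) * (‖A‖ * ((sl⁻¹) ^ (2 * k) * ‖U1ᵀ * M k‖)) := by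
      have := hD2 k
      have := hD1 k
      have h01 : (0:ℝ) ≤ ‖A‖ := norm_nonneg _
      have h02 : (0:ℝ) ≤ ‖U1ᵀ * M k‖ := norm_nonneg _
      have h03 : (0:ℝ) ≤ ‖(Matrix.diagonal σ2) ^ (2 * k)‖ := norm_nonneg _
      have h04 : (0:ℝ) ≤ ‖((Matrix.diagonal σ1)⁻¹) ^ (2 * k)‖ := norm_nonneg _
      have h05 : (0:ℝ) ≤ sl1 ^ (2*k) := pow_nonneg hsl1 _
      have inner : ‖((Matrix.diagonal σ1)⁻¹) ^ (2 * k)‖ * ‖U1ᵀ * M k‖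
          ≤ (sl⁻¹) ^ (2 * k) * ‖U1ᵀ * M k‖ := mul_le_mul_of_nonneg_right (hD1 k) h02
      have mid : ‖A‖ * (‖((Matrix.diagonal σ1)⁻¹) ^ (2 * k)‖ * ‖U1ᵀ * M k‖)
          ≤ ‖A‖ * ((sl⁻¹) ^ (2 * k) * ‖U1ᵀ * M k‖) := mul_le_mul_of_nonneg_left inner h01
      exact mul_le_mul (hD2 k) mid
        (mul_nonneg h01 (mul_nonneg h04 h02)) h05
    have h4 : sl1 ^ (2 * k) * (‖A‖ * ((sl⁻¹) ^ (2 * k) * ‖U1ᵀ * M k‖))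
        = ‖A‖ * (sl1 / sl) ^ (2 * k) * ‖U1ᵀ * M k‖ := by
      rw [div_pow, div_eq_mul_inv, ← inv_pow]
      ring
    linarith [le_trans h2 h3]
  refine ⟨main, ?_⟩
  intro C hC
  have hC0 : 0 ≤ C := le_trans (norm_nonneg _) (hC 0)
  have hr0 : 0 ≤ sl1 / sl := div_nonneg hsl1 hsl.le
  have hr1 : sl1 / sl < 1 := (div_lt_one hsl).2 hlt
  have htend : Tendsto (fun k : ℕ => ‖A‖ * (sl1 / sl) ^ (2 * k) * C) atTop (nhds 0) := by
    have h1 : Tendsto (fun k : ℕ => ((sl1 / sl) ^ 2) ^ k) atTop (nhds 0) :=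
      tendsto_pow_atTop_nhds_zero_of_lt_one (sq_nonneg _)
        (by nlinarith)
    have h2 : Tendsto (fun k : ℕ => ‖A‖ * ((sl1 / sl) ^ 2) ^ k * C) atTop (nhds 0) := by
      have := (h1.const_mul ‖A‖).mul_const C
      simpa using this
    convert h2 using 2 with k
    rw [← pow_mul, mul_comm 2 k]
  apply squeeze_zero (fun k => norm_nonneg _) (fun k => ?_) htend
  refine le_trans (main k) ?_
  have : (sl1 / sl) ^ (2 * k) ≤ (sl1 / sl) ^ (2 * k) := le_refl _
  exact mul_le_mul_of_nonneg_left (hC k)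
    (mul_nonneg (norm_nonneg _) (pow_nonneg hr0 _))
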